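/- For every integer n ≥ 1, the fan F_n is (5,1)-total-threshold-colorable: for every subset N of its edge set there exists a (5,1)-threshold-coloring of F_n with respect to (N, E \ N). -/

import Mathlib

/-- An `(r,t)`-threshold-coloring of the graph `G` with respect to the near-far-labeling
`(N, G.edgeSet \ N)`: a coloring with colors `{0, …, r-1}` such that the colors of the
endvertices of each near edge differ by at most `t`, and the colors of the endvertices of
each far edge differ by more than `t`. -/
def IsThresholdColoring {V : Type*} (G : SimpleGraph V) (N : Set (Sym2 V))
    (r t : ℕ) (c : V → ℕ) : Prop :=
  (∀ v, c v < r) ∧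
  (∀ ⦃u v⦄, G.Adj u v → s(u, v) ∈ N → |(c u : ℤ) - (c v : ℤ)| ≤ (t : ℤ)) ∧
  (∀ ⦃u v⦄, G.Adj u v → s(u, v) ∉ N → (t : ℤ) < |(c u : ℤ) - (c v : ℤ)|)

/-- The fan `F_n`: the path `v_1 v_2 … v_n` (the spine) together with a universal
vertex `v_0` adjacent to every spine vertex. Vertex `0` of `Fin (n+1)` is the apex. -/
def fanGraph (n : ℕ) : SimpleGraph (Fin (n + 1)) :=
  SimpleGraph.fromRel fun i j => i = 0 ∨ (j : ℕ) = (i : ℕ) + 1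

def thrF (p : ℕ) (a nr : Bool) : ℕ :=
  if a then (if (decide (p ≤ 2)) == nr then 1 else 3)
  else (if (decide (p ≤ 2)) == nr then 0 else 4)

def thrG (A nr : ℕ → Bool) : ℕ → ℕ
  | 0 => 2
  | 1 => if A 1 then 1 else 0
  | (k+2) => thrF (thrG A nr (k+1)) (A (k+2)) (nr (k+1))

lemma thrF_mem (p : ℕ) (a nr : Bool) :
    (a = true → (thrF p a nr = 1 ∨ thrF p a nr = 3)) ∧
    (a = false → (thrF p a nr = 0 ∨ thrF p a nr = 4)) := by
  cases a <;> simp [thrF] <;> exact eq_or_ne _ _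

lemma thrF_abs (p : ℕ) (hp : p = 0 ∨ p = 1 ∨ p = 3 ∨ p = 4) (a b : Bool) :
    (b = true → |(thrF p a b : ℤ) - p| ≤ 1) ∧ (b = false → 1 < |(thrF p a b : ℤ) - p|) := by
  rcases hp with rfl|rfl|rfl|rfl <;> cases a <;> cases b <;> decide

lemma thrG_le (A nr : ℕ → Bool) (k : ℕ) : thrG A nr k ≤ 4 := by
  match k with
  | 0 => simp [thrG]
  | 1 => simp [thrG]; split <;> simp
  | (k+2) =>
    show thrF _ _ _ ≤ 4
    unfold thrF; cases A (k+2) <;> simp <;> split <;> omega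

lemma thrG_inv (A nr : ℕ → Bool) (k : ℕ) (hk : 1 ≤ k) :
    (A k = true → (thrG A nr k = 1 ∨ thrG A nr k = 3)) ∧
    (A k = false → (thrG A nr k = 0 ∨ thrG A nr k = 4)) := by
  match k with
  | 1 =>
    constructor <;> intro h <;> simp [thrG, h]
  | (k+2) =>
    show _ ∧ _
    have := thrF_mem (thrG A nr (k+1)) (A (k+2)) (nr (k+1))
    exact ⟨fun h => (this.1 h), fun h => (this.2 h)⟩

open Fin.NatCast

/-- For every `n ≥ 1`, the fan `F_n` is `(5,1)`-total-threshold-colorable. -/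
theorem fan_total_threshold_colorable (n : ℕ) (hn : 1 ≤ n)
    (N : Set (Sym2 (Fin (n + 1)))) (hN : N ⊆ (fanGraph n).edgeSet) :
    ∃ c : Fin (n + 1) → ℕ, IsThresholdColoring (fanGraph n) N 5 1 c := by
  classical
  set A : ℕ → Bool := fun k => decide (s((0 : Fin (n+1)), ((k : ℕ) : Fin (n+1))) ∈ N) with hA
  set B : ℕ → Bool := fun k => decide (s(((k : ℕ) : Fin (n+1)), (((k+1 : ℕ) : ℕ) : Fin (n+1))) ∈ N) with hB
  set c : Fin (n+1) → ℕ := fun v => thrG A B v.val with hc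
  have hcast : ∀ v : Fin (n+1), ((v.val : ℕ) : Fin (n+1)) = v := fun v => Fin.cast_val_eq_self v
  have main : ∀ u v : Fin (n+1), u ≠ v → (u = 0 ∨ (v : ℕ) = (u : ℕ) + 1) →
      (s(u,v) ∈ N → |(c u : ℤ) - c v| ≤ 1) ∧ (s(u,v) ∉ N → 1 < |(c u : ℤ) - c v|) := by
    intro u v huv h
    rcases h with rfl | h
    · -- apex edge
      have hv0 : v.val ≠ 0 := by
        intro h0
        exact huv (Fin.ext (by simp [h0])).symm
      have hv : 1 ≤ v.val := Nat.one_le_iff_ne_zero.mpr hv0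
      have hAv : A v.val = true ↔ s((0 : Fin (n+1)), v) ∈ N := by
        simp [hA, hcast v]
      have e0 : c 0 = 2 := rfl
      constructor
      · intro hmem
        have h1 := (thrG_inv A B v.val hv).1 (hAv.mpr hmem)
        have ecv : c v = thrG A B v.val := rfl
        rw [e0, ecv]
        rcases h1 with h | h <;> rw [h] <;> decide
      · intro hmem
        have h1 := (thrG_inv A B v.val hv).2 (by
          rw [← Bool.not_eq_true, hAv]; exact hmem)
        have ecv : c v = thrG A B v.val := rfl
        rw [e0, ecv]
        rcases h1 with h | h <;> rw [h] <;> decide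
    · -- spine edge (v.val = u.val + 1)
      have hvv : ((u.val + 1 : ℕ) : Fin (n+1)) = v := by
        rw [← h]; exact hcast v
      have hBu : B u.val = true ↔ s(u, v) ∈ N := by
        rw [show B u.val = decide (s(((u.val : ℕ) : Fin (n+1)), ((u.val + 1 : ℕ) : Fin (n+1))) ∈ N) from rfl,
          hcast u, hvv, decide_eq_true_eq]
      by_cases hu0 : u = 0
      · subst hu0
        simp only [Fin.val_zero] at hBu
        have h1 : v.val = 1 := by simpa using h
        have e0 : c 0 = 2 := rfl
        have ecv : c v = (if A 1 then 1 else 0) := by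
          show thrG A B v.val = _
          rw [h1]; rfl
        have hB0 : B 0 = A 1 := by
          simp [hA, hB]
        constructor
        · intro hmem
          have : A 1 = true := by
            rw [← hB0]; exact hBu.mpr hmem
          rw [e0, ecv, this]; decide
        · intro hmem
          have : A 1 = false := by
            rw [← hB0, ← Bool.not_eq_true]
            rw [hBu]; exact hmem
          rw [e0, ecv, this]; decide
      · have hu : 1 ≤ u.val := Nat.one_le_iff_ne_zero.mpr (fun h0 => hu0 (Fin.ext (by simp [h0])))
        obtain ⟨m, hm⟩ := Nat.exists_eq_add_of_le hu
        have hmu : u.val = m + 1 := by omega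
        have ecu : c u = thrG A B (m+1) := by rw [hc]; simp [hmu]
        have ecv : c v = thrF (thrG A B (m+1)) (A (m+2)) (B (m+1)) := by
          show thrG A B v.val = _
          rw [h, hmu]
          rfl
        have hp : thrG A B (m+1) = 0 ∨ thrG A B (m+1) = 1 ∨ thrG A B (m+1) = 3 ∨ thrG A B (m+1) = 4 := by
          have := thrG_inv A B (m+1) (Nat.le_add_left 1 m)
          cases hA1 : A (m+1) with
          | true => rcases this.1 hA1 with h' | h' <;> simp [h']
          | false => rcases this.2 hA1 with h' | h' <;> simp [h']
        have habs := thrF_abs (thrG A B (m+1)) hp (A (m+2)) (B (m+1))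
        have hBm : B (m+1) = B u.val := by rw [hmu]
        constructor
        · intro hmem
          have hb : B (m+1) = true := by rw [hBm]; exact hBu.mpr hmem
          have := habs.1 hb
          rw [ecu, ecv, abs_sub_comm]
          rw [hb] at this ⊢
          exact this
        · intro hmem
          have hb : B (m+1) = false := by
            rw [hBm, ← Bool.not_eq_true, hBu]; exact hmem
          have := habs.2 hb
          rw [ecu, ecv, abs_sub_comm]
          rw [hb] at this ⊢
          exact this
  have key : ∀ u v : Fin (n+1), (fanGraph n).Adj u v →
      (s(u,v) ∈ N → |(c u : ℤ) - c v| ≤ 1) ∧ (s(u,v) ∉ N → 1 < |(c u : ℤ) - c v|) := by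
    intro u v hadj
    rw [fanGraph, SimpleGraph.fromRel_adj] at hadj
    obtain ⟨hne, h | h⟩ := hadj
    · exact main u v hne h
    · have hm := main v u hne.symm h
      rw [Sym2.eq_swap] at hm
      constructor
      · intro hx; have := hm.1 hx; rwa [abs_sub_comm] at this
      · intro hx; have := hm.2 hx; rwa [abs_sub_comm] at this
  refine ⟨c, fun v => lt_of_le_of_lt (thrG_le A B v.val) (by norm_num), ?_, ?_⟩
  · intro u v hadj hmem
    simpa using (key u v hadj).1 hmem
  · intro u v hadj hmem
    simpa using (key u v hadj).2 hmem
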